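/- Validity of the yearly energy balance cut (MOD 3A): in the single-node energy system model, if a capacity vector x : Fin P → ℝ admits a gap-free operation schedule, then the total renewable energy supply over the year is at least the total demand: ∑_{t ∈ Fin T} ∑_{p ∈ Fin P} a t p * x p ≥ ∑_{t ∈ Fin T} d t. -/
import Mathlib

/-- An operation schedule for the single-node energy system model:
`a` production coefficients, `d` demands, `αp`/`αm` conversion efficiencies,
`x` capacities, `sEl`/`sH2` storage levels, `δp`/`δm` conversion in/out-flows,
`Δ` load shedding. -/
def IsSchedule (T P : ℕ) (a : Fin T → Fin P → ℝ) (d : Fin T → ℝ) (αp αm : ℝ)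
    (x : Fin P → ℝ) (sEl sH2 : Fin (T + 1) → ℝ) (δp δm Δ : Fin T → ℝ) : Prop :=
  (∀ t, 0 ≤ sEl t) ∧ (∀ t, 0 ≤ sH2 t) ∧
  (∀ t, 0 ≤ δp t) ∧ (∀ t, 0 ≤ δm t) ∧ (∀ t, 0 ≤ Δ t) ∧
  (∀ t : Fin T, (∑ p, a t p * x p) + δm t - δp t
      + sEl t.castSucc - sEl t.succ + Δ t ≥ d t) ∧
  (∀ t : Fin T, sH2 t.succ = sH2 t.castSucc + αp * δp t - αm * δm t) ∧
  sEl (Fin.last T) ≥ sEl 0 ∧ sH2 (Fin.last T) ≥ sH2 0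

theorem tele_aux (T : ℕ) (f : Fin (T+1) → ℝ) :
    ∑ t : Fin T, (f t.succ - f t.castSucc) = f (Fin.last T) - f 0 := by
  induction T with
  | zero => simp
  | succ n ih =>
    rw [Fin.sum_univ_castSucc]
    have := ih (f ∘ Fin.castSucc)
    simp only [Function.comp_apply, ← Fin.succ_castSucc] at this
    rw [this]
    simp [Fin.succ_last]

/-- Validity of the yearly energy balance cut (MOD 3A): a gap-free
schedule implies total renewable supply over the year covers total demand. -/
theorem yearly_balance_cut_valid {T P : ℕ} (a : Fin T → Fin P → ℝ) (d : Fin T → ℝ)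
    (αp αm : ℝ) (ha : ∀ t p, 0 ≤ a t p) (hd : ∀ t, 0 ≤ d t)
    (hαp : 0 < αp) (hα : αp ≤ αm)
    (x : Fin P → ℝ) (sEl sH2 : Fin (T + 1) → ℝ) (δp δm Δ : Fin T → ℝ)
    (hsched : IsSchedule T P a d αp αm x sEl sH2 δp δm Δ)
    (hgapfree : ∀ t, Δ t = 0) :
    ∑ t : Fin T, ∑ p : Fin P, a t p * x p ≥ ∑ t : Fin T, d t := by
  obtain ⟨_, _, hδp, hδm, _, hbal, hH2, hcEl, hcH2⟩ := hsched
  -- telescoping electricity storage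
  have hElsum : ∑ t : Fin T, (sEl t.succ - sEl t.castSucc)
      = sEl (Fin.last T) - sEl 0 := tele_aux T sEl
  have hH2sum : ∑ t : Fin T, (sH2 t.succ - sH2 t.castSucc)
      = sH2 (Fin.last T) - sH2 0 := tele_aux T sH2
  have hH2sum' : αp * ∑ t, δp t - αm * ∑ t, δm t = sH2 (Fin.last T) - sH2 0 := by
    rw [← hH2sum, Finset.mul_sum, Finset.mul_sum, ← Finset.sum_sub_distrib]
    refine Finset.sum_congr rfl fun t _ => by rw [hH2 t]; ring
  have hδmsum : (0:ℝ) ≤ ∑ t, δm t := Finset.sum_nonneg fun t _ => hδm t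
  have hδ : ∑ t, δm t ≤ ∑ t, δp t := by
    have h1 : αp * ∑ t, δm t ≤ αm * ∑ t, δm t :=
      mul_le_mul_of_nonneg_right hα hδmsum
    have h2 : αm * ∑ t, δm t ≤ αp * ∑ t, δp t := by linarith
    exact le_of_mul_le_mul_left (h1.trans h2) hαp
  -- sum the balance constraints
  have hsum : ∑ t : Fin T, ((∑ p, a t p * x p) + δm t - δp t
      + sEl t.castSucc - sEl t.succ + Δ t) ≥ ∑ t : Fin T, d t :=
    Finset.sum_le_sum fun t _ => hbal t
  simp only [Finset.sum_add_distrib, Finset.sum_sub_distrib] at hsum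
  have hΔsum : ∑ t : Fin T, Δ t = 0 := by simp [hgapfree]
  have hElsum' : ∑ t : Fin T, sEl t.castSucc - ∑ t : Fin T, sEl t.succ
      = sEl 0 - sEl (Fin.last T) := by
    rw [← Finset.sum_sub_distrib]
    have : ∑ t : Fin T, (sEl t.castSucc - sEl t.succ)
        = -∑ t : Fin T, (sEl t.succ - sEl t.castSucc) := by
      rw [← Finset.sum_neg_distrib]; exact Finset.sum_congr rfl fun t _ => by ring
    rw [this, hElsum]; ring
  linarith
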